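/- For s ∈ ℂ with |s| < 1, the supremum over ω on the unit circle of |s + (1-|s|²)/(sω² - 2ω + s̄)| equals (|s|+1)/2. -/

import Mathlib

open Complex ComplexConjugate

lemma upper_bound (s : ℂ) (hs : ‖s‖ < 1) (ω : ℂ) (hω : ‖ω‖ = 1) :
    ‖s + (1 - (‖s‖ : ℂ) ^ 2) / (s * ω ^ 2 - 2 * ω + conj s)‖
      ≤ (‖s‖ + 1) / 2 := by
  set r : ℝ := ‖s‖ with hr
  have hr0 : 0 ≤ r := norm_nonneg s
  set t : ℂ := s * ω with htdef
  have ht : ‖t‖ = r := by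
    simp [htdef, map_mul, hω, hr]
  set x : ℝ := t.re with hxdef
  set y : ℝ := t.im with hydef
  have hxy : x ^ 2 + y ^ 2 = r ^ 2 := by
    have := Complex.sq_norm t
    rw [Complex.normSq_apply] at this
    rw [ht] at this
    nlinarith [this]
  have hxr : |x| ≤ r := ht ▸ Complex.abs_re_le_norm t
  have hxr1 : -r ≤ x := neg_le_of_abs_le hxr
  have hxr2 : x ≤ r := le_of_abs_le hxr
  have hx1 : x < 1 := lt_of_le_of_lt hxr2 hs
  have hωc : ω * conj ω = 1 := by
    rw [Complex.mul_conj]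
    norm_cast
    rw [← Complex.sq_norm, hω]; norm_num
  have hω0 : ω ≠ 0 := by
    intro h; rw [h] at hω; simp at hω
  have hD : s * ω ^ 2 - 2 * ω + conj s = ω * (2 * (x : ℂ) - 2) := by
    have h1 : (2 : ℂ) * (x:ℂ) = t + conj t := by
      rw [Complex.add_conj]; push_cast; ring
    calc s * ω ^ 2 - 2 * ω + conj s
        = ω * (s * ω) + conj s * (ω * conj ω) - 2 * ω := by rw [hωc]; ring
      _ = ω * (t + conj t) - 2 * ω := by
          have : conj t = conj s * conj ω := by rw [htdef, map_mul]
          rw [this, htdef]; ring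
      _ = ω * (2 * (x:ℂ) - 2) := by rw [← h1]; ring
  have hx2r : (2*x - 2 : ℝ) ≠ 0 := by nlinarith
  have hx2 : (2:ℂ) * (x:ℂ) - 2 ≠ 0 := by
    intro h
    apply hx2r
    exact_mod_cast congrArg Complex.re h
  set q : ℝ := (1 - r^2)/(2*x - 2) with hqdef
  have key : ‖s + (1 - (r:ℂ)^2)/(s * ω^2 - 2*ω + conj s)‖
      = ‖t + (q:ℂ)‖ := by
    have hmul : ω * (s + (1 - (r:ℂ)^2)/(s * ω^2 - 2*ω + conj s)) = t + (q:ℂ) := by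
      rw [hD, hqdef, htdef]
      push_cast
      field_simp
    calc ‖s + (1 - (r:ℂ)^2)/(s * ω^2 - 2*ω + conj s)‖
        = ‖ω‖ * ‖s + (1 - (r:ℂ)^2)/(s * ω^2 - 2*ω + conj s)‖ := by
          rw [hω, one_mul]
      _ = ‖ω * (s + (1 - (r:ℂ)^2)/(s * ω^2 - 2*ω + conj s))‖ := (norm_mul _ _).symm
      _ = _ := by rw [hmul]
  rw [key]
  set v : ℝ := 1 - (1 - r^2)/(2*(1-x)) with hvdef
  have h2u : (0:ℝ) < 2*(1-x) := by linarith
  have habs2 : ‖t + (q:ℂ)‖ ^ 2 = v ^ 2 := by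
    rw [Complex.sq_norm, Complex.normSq_apply]
    simp only [Complex.add_re, Complex.add_im, Complex.ofReal_re, Complex.ofReal_im]
    rw [← hxdef, ← hydef, hqdef, hvdef]
    have ha : (1 - r^2)/(2*(1-x)) * (2*(1-x)) = 1 - r^2 := div_mul_cancel₀ _ h2u.ne'
    have hq : (1 - r^2)/(2*x-2) = -((1 - r^2)/(2*(1-x))) := by
      rw [← div_neg]; congr 1; ring
    rw [hq]
    linear_combination hxy + ha
  have hv0 : 0 ≤ v := by
    rw [hvdef, sub_nonneg, div_le_one h2u]
    nlinarith
  have hv1 : v ≤ (r+1)/2 := by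
    rw [hvdef]
    have : (1-r)/2 ≤ (1 - r^2)/(2*(1-x)) := by
      rw [div_le_div_iff₀ (by norm_num) h2u]
      nlinarith
    linarith
  have habs : ‖t + (q:ℂ)‖ = v := by
    have h1 : Real.sqrt (‖t + (q:ℂ)‖ ^2) = Real.sqrt (v^2) := by rw [habs2]
    rwa [Real.sqrt_sq (norm_nonneg _), Real.sqrt_sq hv0] at h1
  exact habs ▸ hv1

lemma attained (s : ℂ) (hs : ‖s‖ < 1) :
    ∃ ω : ℂ, ‖ω‖ = 1 ∧
      ‖s + (1 - (‖s‖ : ℂ) ^ 2) / (s * ω ^ 2 - 2 * ω + conj s)‖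
        = (‖s‖ + 1) / 2 := by
  by_cases h0 : s = 0
  · refine ⟨1, by simp, ?_⟩
    subst h0
    simp
  · set r : ℝ := ‖s‖ with hr
    have hr0 : 0 < r := norm_pos_iff.mpr h0
    have hrC : (r:ℂ) ≠ 0 := by exact_mod_cast hr0.ne'
    have hsc : s * conj s = (r:ℂ)^2 := by
      rw [Complex.mul_conj, Complex.normSq_eq_norm_sq]
      push_cast
      ring
    have hcs : conj s ≠ 0 := by simpa using h0
    have hr1 : (r:ℂ) + 1 ≠ 0 := by
      intro h
      have : (r:ℝ) + 1 = 0 := by exact_mod_cast congrArg Complex.re h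
      linarith
    set ω : ℂ := -conj s / (r:ℂ) with hωdef
    have hωabs : ‖ω‖ = 1 := by
      rw [hωdef, norm_div, norm_neg]
      rw [Complex.norm_conj, Complex.norm_real, Real.norm_eq_abs, abs_of_pos hr0]
      exact div_self hr0.ne'
    have hDval : s * ω ^ 2 - 2 * ω + conj s = 2 * conj s * ((r:ℂ)+1) / (r:ℂ) := by
      rw [hωdef]
      field_simp
      linear_combination hsc
    have hD0 : 2 * conj s * ((r:ℂ)+1) / (r:ℂ) ≠ 0 := by
      apply div_ne_zero _ hrC
      exact mul_ne_zero (mul_ne_zero two_ne_zero hcs) hr1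
    have hval : s + (1 - (r:ℂ)^2)/(s * ω ^ 2 - 2 * ω + conj s)
        = s * ((((r+1)/(2*r) : ℝ)):ℂ) := by
      rw [hDval]
      push_cast
      field_simp
      linear_combination ((r:ℂ)^2 - 1) * hsc
    refine ⟨ω, hωabs, ?_⟩
    rw [hval, norm_mul, Complex.norm_real, Real.norm_eq_abs, ← hr, abs_of_pos (by positivity)]
    field_simp

theorem stmt_8 (s : ℂ) (hs : ‖s‖ < 1) :
    sSup ((fun ω : ℂ =>
        ‖s + (1 - (‖s‖ : ℂ) ^ 2) / (s * ω ^ 2 - 2 * ω + conj s)‖)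
      '' {ω : ℂ | ‖ω‖ = 1}) = (‖s‖ + 1) / 2 := by
  apply IsGreatest.csSup_eq
  constructor
  · obtain ⟨ω, hω, hval⟩ := attained s hs
    exact ⟨ω, hω, hval⟩
  · rintro a ⟨ω, hω, rfl⟩
    exact upper_bound s hs ω hω
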